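/- Let ν ∈ (−1, 1/2) with ν ≠ 0, let m and n be distinct positive integers, and let c_m, c_n be nonzero real numbers. Define w(x) = c_m·sin(m·π·x) + c_n·sin(n·π·x) and define the load p(x) = (1/(12(1−ν²)))·w⁗(x). Then w solves the Kirchhoff–Love strip equation with Poisson ratio ν and load p, but w does NOT solve the PGD limit strip equation with Poisson ratio ν and load p; i.e., there exists x ∈ [0,1] at which the PGD limit strip equation fails. -/

import Mathlib

open Real

/-- `D n w` is the `n`-th derivative of `w` on the interval `[0,1]`. -/
noncomputable def D (n : ℕ) (w : ℝ → ℝ) : ℝ → ℝ :=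
  iteratedDerivWithin n w (Set.Icc (0 : ℝ) 1)

/-- The Rayleigh-type quotient `κ(w) = (∫₀¹ w w'') / (∫₀¹ w²)`. -/
noncomputable def kappa (w : ℝ → ℝ) : ℝ :=
  (∫ x in (0:ℝ)..1, w x * D 2 w x) / (∫ x in (0:ℝ)..1, (w x) ^ 2)

/-- The Kirchhoff–Love strip equation with Poisson ratio `ν` and load `p`. -/
def KLeq (ν : ℝ) (w p : ℝ → ℝ) : Prop :=
  ∀ x ∈ Set.Icc (0 : ℝ) 1, (1 / (12 * (1 - ν ^ 2))) * D 4 w x = p x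

lemma hsinD (c x : ℝ) : HasDerivAt (fun y => Real.sin (c*y)) (c * Real.cos (c*x)) x := by
  simpa [mul_comm, Function.comp_def] using (Real.hasDerivAt_sin (c*x)).comp x ((hasDerivAt_id x).const_mul c)

lemma hcosD (c x : ℝ) : HasDerivAt (fun y => Real.cos (c*y)) (-(c * Real.sin (c*x))) x := by
  have := (Real.hasDerivAt_cos (c*x)).comp x ((hasDerivAt_id x).const_mul c)
  exact this.congr_deriv (by ring)

lemma derivWithin_Icc_eq {g f f' : ℝ → ℝ} (hg : ∀ x ∈ Set.Icc (0:ℝ) 1, g x = f x)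
    (hf : ∀ x, HasDerivAt f (f' x) x) {x : ℝ} (hx : x ∈ Set.Icc (0:ℝ) 1) :
    derivWithin g (Set.Icc (0:ℝ) 1) x = f' x := by
  rw [derivWithin_congr (fun y hy => hg y hy) (hg x hx)]
  exact ((hf x).hasDerivWithinAt).derivWithin (uniqueDiffOn_Icc one_pos x hx)

lemma D_two_four (c d cm cn : ℝ) (w : ℝ → ℝ)
    (hw : ∀ x, w x = cm * Real.sin (c*x) + cn * Real.sin (d*x)) :
    (∀ x ∈ Set.Icc (0:ℝ) 1,
       iteratedDerivWithin 2 w (Set.Icc (0:ℝ) 1) x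
         = -(cm * c^2 * Real.sin (c*x) + cn * d^2 * Real.sin (d*x))) ∧
    (∀ x ∈ Set.Icc (0:ℝ) 1,
       iteratedDerivWithin 4 w (Set.Icc (0:ℝ) 1) x
         = cm * c^4 * Real.sin (c*x) + cn * d^4 * Real.sin (d*x)) := by
  have uD : UniqueDiffOn ℝ (Set.Icc (0:ℝ) 1) := uniqueDiffOn_Icc one_pos
  have h01 : ∀ x : ℝ, HasDerivAt (fun y => cm * Real.sin (c*y) + cn * Real.sin (d*y))
      (cm * c * Real.cos (c*x) + cn * d * Real.cos (d*x)) x := by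
    intro x
    have := ((hsinD c x).const_mul cm).add ((hsinD d x).const_mul cn)
    exact this.congr_deriv (by ring)
  have h12 : ∀ x : ℝ, HasDerivAt (fun y => cm * c * Real.cos (c*y) + cn * d * Real.cos (d*y))
      (-(cm * c^2 * Real.sin (c*x) + cn * d^2 * Real.sin (d*x))) x := by
    intro x
    have := ((hcosD c x).const_mul (cm*c)).add ((hcosD d x).const_mul (cn*d))
    exact this.congr_deriv (by ring)
  have h23 : ∀ x : ℝ, HasDerivAt (fun y => -(cm * c^2 * Real.sin (c*y) + cn * d^2 * Real.sin (d*y)))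
      (-(cm * c^3 * Real.cos (c*x) + cn * d^3 * Real.cos (d*x))) x := by
    intro x
    have := (((hsinD c x).const_mul (cm*c^2)).add ((hsinD d x).const_mul (cn*d^2))).neg
    exact this.congr_deriv (by ring)
  have h34 : ∀ x : ℝ, HasDerivAt (fun y => -(cm * c^3 * Real.cos (c*y) + cn * d^3 * Real.cos (d*y)))
      (cm * c^4 * Real.sin (c*x) + cn * d^4 * Real.sin (d*x)) x := by
    intro x
    have := (((hcosD c x).const_mul (cm*c^3)).add ((hcosD d x).const_mul (cn*d^3))).neg
    exact this.congr_deriv (by ring)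
  have hD1 : ∀ x ∈ Set.Icc (0:ℝ) 1, iteratedDerivWithin 1 w (Set.Icc (0:ℝ) 1) x
      = cm * c * Real.cos (c*x) + cn * d * Real.cos (d*x) := by
    intro x hx
    rw [iteratedDerivWithin_succ, iteratedDerivWithin_zero]
    exact derivWithin_Icc_eq (fun y _ => hw y) h01 hx
  have hD2 : ∀ x ∈ Set.Icc (0:ℝ) 1, iteratedDerivWithin 2 w (Set.Icc (0:ℝ) 1) x
      = -(cm * c^2 * Real.sin (c*x) + cn * d^2 * Real.sin (d*x)) := by
    intro x hx
    rw [iteratedDerivWithin_succ]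
    exact derivWithin_Icc_eq hD1 h12 hx
  have hD3 : ∀ x ∈ Set.Icc (0:ℝ) 1, iteratedDerivWithin 3 w (Set.Icc (0:ℝ) 1) x
      = -(cm * c^3 * Real.cos (c*x) + cn * d^3 * Real.cos (d*x)) := by
    intro x hx
    rw [iteratedDerivWithin_succ]
    exact derivWithin_Icc_eq hD2 h23 hx
  have hD4 : ∀ x ∈ Set.Icc (0:ℝ) 1, iteratedDerivWithin 4 w (Set.Icc (0:ℝ) 1) x
      = cm * c^4 * Real.sin (c*x) + cn * d^4 * Real.sin (d*x) := by
    intro x hx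
    rw [iteratedDerivWithin_succ]
    exact derivWithin_Icc_eq hD3 h34 hx
  exact ⟨hD2, hD4⟩

lemma cosI (k : ℤ) (hk : k ≠ 0) : ∫ x in (0:ℝ)..1, Real.cos ((k:ℝ)*π*x) = 0 := by
  have hc : ((k:ℝ)*π) ≠ 0 :=
    mul_ne_zero (Int.cast_ne_zero.mpr hk) Real.pi_ne_zero
  rw [intervalIntegral.integral_comp_mul_left Real.cos hc, integral_cos]
  simp [Real.sin_int_mul_pi]

lemma ISS (a b : ℕ) (ha : 0 < a) (hb : 0 < b) :
    (∫ x in (0:ℝ)..1, Real.sin ((a:ℝ)*π*x) * Real.sin ((b:ℝ)*π*x))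
      = if a = b then 1/2 else 0 := by
  have key : ∀ x : ℝ, Real.sin ((a:ℝ)*π*x) * Real.sin ((b:ℝ)*π*x)
      = Real.cos ((((a:ℤ)-(b:ℤ) : ℤ):ℝ)*π*x) / 2 - Real.cos ((((a:ℤ)+(b:ℤ) : ℤ):ℝ)*π*x) / 2 := by
    intro x
    push_cast
    rw [show ((a:ℝ)-b)*π*x = (a:ℝ)*π*x - (b:ℝ)*π*x by ring,
        show ((a:ℝ)+b)*π*x = (a:ℝ)*π*x + (b:ℝ)*π*x by ring,
        Real.cos_sub, Real.cos_add]
    ring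
  have i1 : IntervalIntegrable (fun x => Real.cos ((((a:ℤ)-(b:ℤ) : ℤ):ℝ)*π*x) / 2)
      MeasureTheory.volume 0 1 := (Continuous.div_const (by fun_prop) 2).intervalIntegrable _ _
  have i2 : IntervalIntegrable (fun x => Real.cos ((((a:ℤ)+(b:ℤ) : ℤ):ℝ)*π*x) / 2)
      MeasureTheory.volume 0 1 := (Continuous.div_const (by fun_prop) 2).intervalIntegrable _ _
  rw [intervalIntegral.integral_congr (g := fun x =>
      Real.cos ((((a:ℤ)-(b:ℤ) : ℤ):ℝ)*π*x) / 2 - Real.cos ((((a:ℤ)+(b:ℤ) : ℤ):ℝ)*π*x) / 2)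
      (fun x _ => key x),
    intervalIntegral.integral_sub i1 i2,
    intervalIntegral.integral_div, intervalIntegral.integral_div]
  have h2 : (∫ x in (0:ℝ)..1, Real.cos ((((a:ℤ)+(b:ℤ) : ℤ):ℝ)*π*x)) = 0 :=
    cosI _ (by positivity)
  by_cases hab : a = b
  · subst hab
    simp only [if_pos rfl, h2, sub_self, Int.cast_zero, zero_mul]
    norm_num
  · have h1 : (∫ x in (0:ℝ)..1, Real.cos ((((a:ℤ)-(b:ℤ) : ℤ):ℝ)*π*x)) = 0 :=
      cosI _ (sub_ne_zero.mpr (by exact_mod_cast hab))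
    push_cast at h1 h2
    simp [hab, h1, h2]

lemma combo_int (a b : ℕ) (ha : 0 < a) (hb : 0 < b) (hab : a ≠ b) (α β : ℝ) :
    (∫ x in (0:ℝ)..1,
        (α * Real.sin ((a:ℝ)*π*x) + β * Real.sin ((b:ℝ)*π*x)) * Real.sin ((a:ℝ)*π*x))
      = α / 2 := by
  have e : ∀ x : ℝ, (α * Real.sin ((a:ℝ)*π*x) + β * Real.sin ((b:ℝ)*π*x)) * Real.sin ((a:ℝ)*π*x)
      = α * (Real.sin ((a:ℝ)*π*x) * Real.sin ((a:ℝ)*π*x))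
        + β * (Real.sin ((b:ℝ)*π*x) * Real.sin ((a:ℝ)*π*x)) := fun x => by ring
  have i1 : IntervalIntegrable
      (fun x => α * (Real.sin ((a:ℝ)*π*x) * Real.sin ((a:ℝ)*π*x))) MeasureTheory.volume 0 1 :=
    (by fun_prop : Continuous _).intervalIntegrable _ _
  have i2 : IntervalIntegrable
      (fun x => β * (Real.sin ((b:ℝ)*π*x) * Real.sin ((a:ℝ)*π*x))) MeasureTheory.volume 0 1 :=
    (by fun_prop : Continuous _).intervalIntegrable _ _
  rw [intervalIntegral.integral_congr (g := fun x =>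
        α * (Real.sin ((a:ℝ)*π*x) * Real.sin ((a:ℝ)*π*x))
        + β * (Real.sin ((b:ℝ)*π*x) * Real.sin ((a:ℝ)*π*x))) (fun x _ => e x),
    intervalIntegral.integral_add i1 i2,
    intervalIntegral.integral_const_mul, intervalIntegral.integral_const_mul,
    ISS a a ha ha, ISS b a hb ha, if_pos rfl, if_neg (Ne.symm hab)]
  ring

/-- A two-mode sinusoidal deflection `w(x) = cₘ sin(mπx) + cₙ sin(nπx)` solves the
Kirchhoff–Love strip equation with load `p = w⁗/(12(1−ν²))`, but does not solve the
PGD limit strip equation with the same load (when `ν ≠ 0`). -/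
theorem two_mode_deflection_fails_PGD_equation
    (ν : ℝ) (hν : ν ∈ Set.Ioo (-1 : ℝ) (1/2)) (hν0 : ν ≠ 0)
    (m n : ℕ) (hm : 0 < m) (hn : 0 < n) (hmn : m ≠ n)
    (cm cn : ℝ) (hcm : cm ≠ 0) (hcn : cn ≠ 0)
    (w p : ℝ → ℝ)
    (hw : ∀ x, w x = cm * Real.sin ((m : ℝ) * π * x) + cn * Real.sin ((n : ℝ) * π * x))
    (hp : ∀ x, p x = (1 / (12 * (1 - ν ^ 2))) * D 4 w x) :
    KLeq ν w p ∧
      ∃ x ∈ Set.Icc (0 : ℝ) 1,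
        ((1 - ν) / (12 * (1 + ν) * (1 - 2 * ν))) * D 4 w x
          - (ν ^ 2 / (12 * (1 - ν ^ 2) * (1 - 2 * ν)))
              * (2 * kappa w * D 2 w x - (kappa w) ^ 2 * w x) ≠ p x := by
  obtain ⟨hν1, hν2⟩ := hν
  have hνa : (1:ℝ) + ν ≠ 0 := by linarith
  have hνb : (1:ℝ) - ν ≠ 0 := by linarith
  have hνc : (1:ℝ) - 2*ν ≠ 0 := by linarith
  have hνd : (1:ℝ) - ν^2 ≠ 0 := by nlinarith
  refine ⟨fun x _ => (hp x).symm, ?_⟩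
  by_contra hcon
  push_neg at hcon
  obtain ⟨hD2, hD4⟩ := D_two_four ((m:ℝ)*π) ((n:ℝ)*π) cm cn w hw
  set κ : ℝ := kappa w with hκ
  set B : ℝ := ν ^ 2 / (12 * (1 - ν ^ 2) * (1 - 2 * ν)) with hB
  have key : ∀ x ∈ Set.Icc (0:ℝ) 1,
      (B * (cm * (((m:ℝ)*π)^2 + κ)^2)) * Real.sin ((m:ℝ)*π*x)
        + (B * (cn * (((n:ℝ)*π)^2 + κ)^2)) * Real.sin ((n:ℝ)*π*x) = 0 := by
    intro x hx
    have h0 := hcon x hx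
    rw [hp x] at h0
    simp only [D] at h0
    rw [hD2 x hx, hD4 x hx, hw x] at h0
    have hA' : (1 - ν) / (12 * (1 + ν) * (1 - 2 * ν)) = 1 / (12 * (1 - ν ^ 2)) + B := by
      have e1 : (12:ℝ) * (1 - ν ^ 2) ≠ 0 := mul_ne_zero (by norm_num) hνd
      have e2 : (12:ℝ) * (1 - ν ^ 2) * (1 - 2 * ν) ≠ 0 := mul_ne_zero e1 hνc
      have e3 : (12:ℝ) * (1 + ν) * (1 - 2 * ν) ≠ 0 := mul_ne_zero (mul_ne_zero (by norm_num) hνa) hνc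
      rw [hB, div_add_div _ _ e1 e2, div_eq_div_iff e3 (mul_ne_zero e1 e2)]; ring
    rw [hA'] at h0
    linear_combination h0
  have key' : ∀ x ∈ Set.Icc (0:ℝ) 1,
      (B * (cn * (((n:ℝ)*π)^2 + κ)^2)) * Real.sin ((n:ℝ)*π*x)
        + (B * (cm * (((m:ℝ)*π)^2 + κ)^2)) * Real.sin ((m:ℝ)*π*x) = 0 := by
    intro x hx
    linear_combination key x hx
  have hint : ∀ (a b : ℕ), 0 < a → 0 < b → a ≠ b → ∀ α β : ℝ,
      (∀ x ∈ Set.Icc (0:ℝ) 1,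
        α * Real.sin ((a:ℝ)*π*x) + β * Real.sin ((b:ℝ)*π*x) = 0) → α = 0 := by
    intro a b ha hb hab α β hzero
    have h1 : (∫ x in (0:ℝ)..1,
        (α * Real.sin ((a:ℝ)*π*x) + β * Real.sin ((b:ℝ)*π*x)) * Real.sin ((a:ℝ)*π*x)) = 0 := by
      rw [intervalIntegral.integral_congr (g := fun _ => (0:ℝ))]
      · simp
      · intro x hx
        rw [Set.uIcc_of_le zero_le_one] at hx
        simp only
        rw [hzero x hx, zero_mul]
    rw [combo_int a b ha hb hab α β] at h1
    linarith
  have hαm : B * (cm * (((m:ℝ)*π)^2 + κ)^2) = 0 :=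
    hint m n hm hn hmn _ _ key
  have hαn : B * (cn * (((n:ℝ)*π)^2 + κ)^2) = 0 :=
    hint n m hn hm (Ne.symm hmn) _ _ key'
  have hB0 : B ≠ 0 := by
    rw [hB]
    exact div_ne_zero (pow_ne_zero 2 hν0)
      (by intro h; apply hνd; nlinarith [mul_ne_zero hνd hνc])
  have hm0 : (((m:ℝ)*π)^2 + κ) = 0 := by
    have h1 : (((m:ℝ)*π)^2 + κ)^2 = 0 := by
      have := (mul_eq_zero.mp hαm).resolve_left hB0
      exact (mul_eq_zero.mp this).resolve_left hcm
    exact pow_eq_zero_iff two_ne_zero |>.mp h1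
  have hn0 : (((n:ℝ)*π)^2 + κ) = 0 := by
    have h1 : (((n:ℝ)*π)^2 + κ)^2 = 0 := by
      have := (mul_eq_zero.mp hαn).resolve_left hB0
      exact (mul_eq_zero.mp this).resolve_left hcn
    exact pow_eq_zero_iff two_ne_zero |>.mp h1
  have hsq : ((m:ℝ))^2 * π^2 = ((n:ℝ))^2 * π^2 := by nlinarith
  have hπ2 : (0:ℝ) < π^2 := by positivity
  have hmn2 : ((m:ℝ))^2 = ((n:ℝ))^2 := mul_right_cancel₀ (ne_of_gt hπ2) hsq
  have : m^2 = n^2 := by exact_mod_cast hmn2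
  exact hmn (Nat.pow_left_injective (by norm_num) this)
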